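/- Let y = Φx where x is K-sparse with support T, and let S ⊂ T. Then γ := max_{u ∈ T^c} |φ_u' r_S| satisfies γ ≤ (δ_{K+1}/(1 - δ_K)) ‖x_{T∖S}‖₂, where r_S = P_S^⊥ y is the residual of the orthogonal projection of y onto the complement of the column span of Φ_S. -/

import Mathlib

open Matrix Finset

noncomputable def l2 {n : Type*} [Fintype n] (x : n → ℝ) : ℝ :=
  Real.sqrt (∑ i, (x i) ^ 2)

def Sparse {N : ℕ} (K : ℕ) (x : Fin N → ℝ) : Prop :=
  (Finset.univ.filter (fun i => x i ≠ 0)).card ≤ K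

def RIP {M N : ℕ} (Φ : Matrix (Fin M) (Fin N) ℝ) (K : ℕ) (δ : ℝ) : Prop :=
  ∀ x : Fin N → ℝ, Sparse K x →
    (1 - δ) * (l2 x) ^ 2 ≤ (l2 (Φ.mulVec x)) ^ 2 ∧
    (l2 (Φ.mulVec x)) ^ 2 ≤ (1 + δ) * (l2 x) ^ 2

def colSub {M N : ℕ} (Φ : Matrix (Fin M) (Fin N) ℝ) (S : Finset (Fin N)) :
    Matrix (Fin M) {i // i ∈ S} ℝ := fun r c => Φ r c.1

noncomputable def resid {M N : ℕ} (Φ : Matrix (Fin M) (Fin N) ℝ) (S : Finset (Fin N))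
    (y : Fin M → ℝ) : Fin M → ℝ :=
  y - (colSub Φ S).mulVec
    ((((colSub Φ S)ᵀ * colSub Φ S)⁻¹).mulVec ((colSub Φ S)ᵀ.mulVec y))

def restr {N : ℕ} (x : Fin N → ℝ) (S : Finset (Fin N)) : {i // i ∈ S} → ℝ :=
  fun i => x i.1

lemma l2_nonneg {n : Type*} [Fintype n] (v : n → ℝ) : 0 ≤ l2 v := Real.sqrt_nonneg _

lemma l2_sq {n : Type*} [Fintype n] (v : n → ℝ) : l2 v ^ 2 = ∑ i, v i ^ 2 :=
  Real.sq_sqrt (Finset.sum_nonneg fun i _ => sq_nonneg _)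

lemma l2_sq_eq_dot {n : Type*} [Fintype n] (v : n → ℝ) : l2 v ^ 2 = v ⬝ᵥ v := by
  rw [l2_sq]; simp [dotProduct, sq]

lemma l2_eq_zero {n : Type*} [Fintype n] {v : n → ℝ} (h : l2 v = 0) : v = 0 := by
  have h2 : ∑ i, v i ^ 2 = 0 := by
    have := l2_sq v; rw [h] at this; simpa using this.symm
  funext i
  have := (Finset.sum_eq_zero_iff_of_nonneg (fun i _ => sq_nonneg (v i))).1 h2 i (mem_univ i)
  exact pow_eq_zero_iff (by norm_num) |>.1 this

lemma l2_smul {n : Type*} [Fintype n] (c : ℝ) (hc : 0 ≤ c) (v : n → ℝ) :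
    l2 (c • v) = c * l2 v := by
  unfold l2
  have : ∑ i, (c • v) i ^ 2 = c ^ 2 * ∑ i, v i ^ 2 := by
    rw [Finset.mul_sum]; congr 1; funext i; simp [mul_pow]
  rw [this, Real.sqrt_mul (sq_nonneg c), Real.sqrt_sq hc]

lemma sparse_of_suppIn {N K : ℕ} {U : Finset (Fin N)} {a : Fin N → ℝ}
    (h : ∀ i ∉ U, a i = 0) (hc : U.card ≤ K) : Sparse K a := by
  refine le_trans (Finset.card_le_card ?_) hc
  intro i hi
  simp only [mem_filter, mem_univ, true_and] at hi
  by_contra h'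
  exact hi (h i h')

lemma rip_dot_half {M N K : ℕ} {Φ : Matrix (Fin M) (Fin N) ℝ} {δ : ℝ}
    (hR : RIP Φ K δ) {U : Finset (Fin N)} (hU : U.card ≤ K)
    {a b : Fin N → ℝ} (ha : ∀ i ∉ U, a i = 0) (hb : ∀ i ∉ U, b i = 0) :
    |Φ *ᵥ a ⬝ᵥ Φ *ᵥ b - a ⬝ᵥ b| ≤ δ * (l2 a ^ 2 + l2 b ^ 2) / 2 := by
  have hs1 : Sparse K (a + b) :=
    sparse_of_suppIn (fun i hi => by simp [ha i hi, hb i hi]) hU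
  have hs2 : Sparse K (a - b) :=
    sparse_of_suppIn (fun i hi => by simp [ha i hi, hb i hi]) hU
  obtain ⟨h1, h2⟩ := hR _ hs1
  obtain ⟨h3, h4⟩ := hR _ hs2
  have e1 : l2 (Φ *ᵥ (a + b)) ^ 2 =
      l2 (Φ *ᵥ a) ^ 2 + 2 * (Φ *ᵥ a ⬝ᵥ Φ *ᵥ b) + l2 (Φ *ᵥ b) ^ 2 := by
    rw [mulVec_add, l2_sq_eq_dot, l2_sq_eq_dot, l2_sq_eq_dot, dotProduct_add,
      add_dotProduct, add_dotProduct, dotProduct_comm (Φ *ᵥ b) (Φ *ᵥ a)]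
    ring
  have e2 : l2 (Φ *ᵥ (a - b)) ^ 2 =
      l2 (Φ *ᵥ a) ^ 2 - 2 * (Φ *ᵥ a ⬝ᵥ Φ *ᵥ b) + l2 (Φ *ᵥ b) ^ 2 := by
    rw [mulVec_sub, l2_sq_eq_dot, l2_sq_eq_dot, l2_sq_eq_dot, dotProduct_sub,
      sub_dotProduct, sub_dotProduct, dotProduct_comm (Φ *ᵥ b) (Φ *ᵥ a)]
    ring
  have e3 : l2 (a + b) ^ 2 = l2 a ^ 2 + 2 * (a ⬝ᵥ b) + l2 b ^ 2 := by
    rw [l2_sq_eq_dot, l2_sq_eq_dot, l2_sq_eq_dot, dotProduct_add,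
      add_dotProduct, add_dotProduct, dotProduct_comm b a]
    ring
  have e4 : l2 (a - b) ^ 2 = l2 a ^ 2 - 2 * (a ⬝ᵥ b) + l2 b ^ 2 := by
    rw [l2_sq_eq_dot, l2_sq_eq_dot, l2_sq_eq_dot, dotProduct_sub,
      sub_dotProduct, sub_dotProduct, dotProduct_comm b a]
    ring
  rw [e1] at h1 h2
  rw [e2] at h3 h4
  rw [e3] at h1 h2
  rw [e4] at h3 h4
  rw [abs_sub_le_iff]
  constructor <;> nlinarith [h1, h2, h3, h4]

lemma rip_dot {M N K : ℕ} {Φ : Matrix (Fin M) (Fin N) ℝ} {δ : ℝ} (hδ : 0 ≤ δ)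
    (hR : RIP Φ K δ) {U : Finset (Fin N)} (hU : U.card ≤ K)
    {a b : Fin N → ℝ} (ha : ∀ i ∉ U, a i = 0) (hb : ∀ i ∉ U, b i = 0) :
    |Φ *ᵥ a ⬝ᵥ Φ *ᵥ b - a ⬝ᵥ b| ≤ δ * (l2 a * l2 b) := by
  rcases eq_or_lt_of_le (l2_nonneg a) with h0a | h0a
  · have h0 : a = 0 := l2_eq_zero h0a.symm
    rw [h0, mulVec_zero, zero_dotProduct, zero_dotProduct, sub_zero, abs_zero]
    exact mul_nonneg hδ (mul_nonneg (l2_nonneg _) (l2_nonneg _))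
  rcases eq_or_lt_of_le (l2_nonneg b) with h0b | h0b
  · have h0 : b = 0 := l2_eq_zero h0b.symm
    rw [h0, mulVec_zero, dotProduct_zero, dotProduct_zero, sub_zero, abs_zero]
    exact mul_nonneg hδ (mul_nonneg (l2_nonneg _) (l2_nonneg _))
  have key := rip_dot_half hR hU (a := l2 b • a) (b := l2 a • b)
    (fun i hi => by simp [ha i hi]) (fun i hi => by simp [hb i hi])
  rw [mulVec_smul, mulVec_smul, smul_dotProduct, dotProduct_smul,
    smul_dotProduct, dotProduct_smul, l2_smul _ (l2_nonneg b), l2_smul _ (l2_nonneg a)] at key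
  simp only [smul_eq_mul] at key
  have hpos : 0 < l2 b * l2 a := mul_pos h0b h0a
  rw [show l2 b * (l2 a * (Φ *ᵥ a ⬝ᵥ Φ *ᵥ b)) - l2 b * (l2 a * (a ⬝ᵥ b))
      = (l2 b * l2 a) * (Φ *ᵥ a ⬝ᵥ Φ *ᵥ b - a ⬝ᵥ b) by ring,
    abs_mul, abs_of_nonneg hpos.le] at key
  refine (mul_le_mul_iff_right₀ hpos).1 (key.trans_eq ?_)
  ring

noncomputable def extv {N : ℕ} (S : Finset (Fin N)) (w : {i // i ∈ S} → ℝ) : Fin N → ℝ :=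
  fun i => if h : i ∈ S then w ⟨i, h⟩ else 0

lemma extv_mem {N : ℕ} (S : Finset (Fin N)) (w : {i // i ∈ S} → ℝ) {i : Fin N}
    (h : i ∈ S) : extv S w i = w ⟨i, h⟩ := by simp [extv, h]

lemma extv_not_mem {N : ℕ} (S : Finset (Fin N)) (w : {i // i ∈ S} → ℝ) {i : Fin N}
    (h : i ∉ S) : extv S w i = 0 := by simp [extv, h]

lemma mulVec_extv {M N : ℕ} (Φ : Matrix (Fin M) (Fin N) ℝ) (S : Finset (Fin N))
    (w : {i // i ∈ S} → ℝ) : Φ *ᵥ extv S w = (colSub Φ S) *ᵥ w := by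
  funext r
  show ∑ j, Φ r j * extv S w j = ∑ c : {i // i ∈ S}, colSub Φ S r c * w c
  rw [← Finset.sum_subset (Finset.subset_univ S)
    (fun j _ hj => by rw [extv_not_mem S w hj, mul_zero]),
    ← Finset.sum_coe_sort S (fun j => Φ r j * extv S w j)]
  apply Finset.sum_congr rfl
  intro c _
  rw [extv_mem S w c.2]
  rfl

lemma l2_extv {N : ℕ} (S : Finset (Fin N)) (w : {i // i ∈ S} → ℝ) :
    l2 (extv S w) = l2 w := by
  unfold l2
  congr 1
  rw [← Finset.sum_subset (Finset.subset_univ S)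
    (fun j _ hj => by rw [extv_not_mem S w hj]; norm_num),
    ← Finset.sum_coe_sort S (fun j => extv S w j ^ 2)]
  apply Finset.sum_congr rfl
  intro c _
  rw [extv_mem S w c.2]

lemma l2_restr_eq {N : ℕ} (x : Fin N → ℝ) (U : Finset (Fin N)) :
    l2 (restr x U) = l2 (fun i => if i ∈ U then x i else 0) := by
  unfold l2 restr
  congr 1
  rw [← Finset.sum_subset (Finset.subset_univ U)
    (fun j _ hj => by simp [hj]),
    ← Finset.sum_coe_sort U (fun j => (if j ∈ U then x j else 0) ^ 2)]
  apply Finset.sum_congr rfl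
  intro c _
  simp [c.2]

theorem gamma_upper_bound {M N K : ℕ} (Φ : Matrix (Fin M) (Fin N) ℝ)
    (x : Fin N → ℝ) (T S : Finset (Fin N)) (y : Fin M → ℝ)
    (hy : y = Φ.mulVec x) (hT : T.card = K) (hsupp : ∀ i, i ∉ T → x i = 0)
    (hS : S ⊂ T) (δK δK1 : ℝ) (hδK0 : 0 ≤ δK) (hδK1 : δK < 1)
    (hδK10 : 0 ≤ δK1) (hδK11 : δK1 < 1)
    (hRIPK : RIP Φ K δK) (hRIPK1 : RIP Φ (K + 1) δK1) :
    ∀ u, u ∉ T →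
      |(fun i => Φ i u) ⬝ᵥ resid Φ S y| ≤
        (δK1 / (1 - δK)) * l2 (restr x (T \ S)) := by
  intro u hu
  have hST : S ⊆ T := hS.subset
  set A := colSub Φ S with hA
  -- Positive definiteness of the Gram matrix
  have hGpd : (Aᵀ * A).PosDef := by
    refine Matrix.PosDef.of_dotProduct_mulVec_pos (by simpa [Matrix.IsHermitian, Matrix.IsSymm] using isSymm_transpose_mul_self A) ?_
    intro w hw
    have hsp : Sparse K (extv S w) :=
      sparse_of_suppIn (fun i hi => extv_not_mem S w hi)
        (le_trans (Finset.card_le_card hST) hT.le)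
    have hlow := (hRIPK _ hsp).1
    have hdot : star w ⬝ᵥ ((Aᵀ * A) *ᵥ w) = l2 (Φ *ᵥ extv S w) ^ 2 := by
      rw [l2_sq_eq_dot, mulVec_extv, ← hA]
      simp only [star_trivial]
      rw [← mulVec_mulVec, dotProduct_mulVec, vecMul_transpose]
    rw [hdot]
    have hpos : 0 < l2 (extv S w) ^ 2 := by
      rw [l2_sq]
      obtain ⟨j, hj⟩ := Function.ne_iff.1 hw
      refine Finset.sum_pos' (fun i _ => sq_nonneg _) ⟨j.1, mem_univ _, ?_⟩
      rw [extv_mem S w j.2]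
      have hj' : w ⟨j.1, j.2⟩ ≠ 0 := by simpa using hj
      exact (pow_pos (abs_pos.2 hj') 2).trans_eq (sq_abs _)
    nlinarith [hlow, hpos]
  have hdet : IsUnit (Aᵀ * A).det := hGpd.det_pos.ne'.isUnit
  set z := (Aᵀ * A)⁻¹ *ᵥ (Aᵀ *ᵥ y) with hz
  set xt := x - extv S z with hxtdef
  have hres : resid Φ S y = Φ *ᵥ xt := by
    unfold resid
    rw [← hA, ← hz, hxtdef]
    have h2 : Φ *ᵥ (x - extv S z) = Φ *ᵥ x - A *ᵥ z := by
      rw [mulVec_sub, mulVec_extv, hA]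
    rw [h2, ← hy]
  have hAr : Aᵀ *ᵥ resid Φ S y = 0 := by
    unfold resid
    rw [← hA, ← hz]
    rw [mulVec_sub, mulVec_mulVec, mulVec_mulVec, Matrix.mul_nonsing_inv _ hdet,
      Matrix.one_mulVec, sub_self]
  have hsuppxt : ∀ i ∉ T, xt i = 0 := by
    intro i hi
    show x i - extv S z i = 0
    rw [hsupp i hi, extv_not_mem S z (fun hiS => hi (hST hiS)), sub_zero]
  -- Step A
  have hA1 : (fun i => Φ i u) ⬝ᵥ resid Φ S y = Φ *ᵥ (Pi.single u 1) ⬝ᵥ (Φ *ᵥ xt) := by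
    rw [hres]
    congr 1
    rw [mulVec_single]
    funext i
    simp
  have hsingle_supp : ∀ i ∉ insert u T, (Pi.single u 1 : Fin N → ℝ) i = 0 := by
    intro i hi
    have hne : i ≠ u := by intro h; subst h; exact hi (Finset.mem_insert_self i T)
    exact Pi.single_eq_of_ne hne 1
  have hxt_supp' : ∀ i ∉ insert u T, xt i = 0 := fun i hi =>
    hsuppxt i (fun h => hi (Finset.mem_insert_of_mem h))
  have hcard : (insert u T).card ≤ K + 1 := by
    rw [Finset.card_insert_of_notMem hu, hT]
  have hdot0 : (Pi.single u 1 : Fin N → ℝ) ⬝ᵥ xt = 0 := by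
    rw [single_dotProduct, one_mul, hsuppxt u hu]
  have hl2single : l2 ((Pi.single u 1 : Fin N → ℝ)) = 1 := by
    unfold l2
    have hsum : ∑ i, (Pi.single u 1 : Fin N → ℝ) i ^ 2 = 1 := by
      have h1 : ∀ i, (Pi.single u 1 : Fin N → ℝ) i ^ 2 = if i = u then 1 else 0 := by
        intro i
        rcases eq_or_ne i u with h | h
        · subst h; simp
        · simp [Pi.single_eq_of_ne h, h]
      rw [Finset.sum_congr rfl (fun i _ => h1 i), Finset.sum_ite_eq' Finset.univ u fun _ => (1:ℝ),
        if_pos (Finset.mem_univ u)]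
    rw [hsum, Real.sqrt_one]
  have stepA := rip_dot hδK10 hRIPK1 hcard hsingle_supp hxt_supp'
  rw [hdot0, sub_zero, hl2single, one_mul] at stepA
  -- Step B
  set g : Fin N → ℝ := fun i => if i ∈ T \ S then x i else 0 with hg
  set w : Fin N → ℝ := extv S (restr xt S) with hw
  have hdecomp : xt = g + w := by
    funext i
    show xt i = g i + w i
    by_cases hiS : i ∈ S
    · rw [hw, extv_mem _ _ hiS, hg]
      have hns : i ∉ T \ S := fun h => (Finset.mem_sdiff.1 h).2 hiS
      simp only [if_neg hns, zero_add]
      rfl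
    · rw [hw, extv_not_mem _ _ hiS, add_zero, hg]
      by_cases hiT : i ∈ T
      · simp only [if_pos (Finset.mem_sdiff.2 ⟨hiT, hiS⟩)]
        show x i - extv S z i = x i
        rw [extv_not_mem _ _ hiS, sub_zero]
      · simp only [if_neg (fun h => hiT (Finset.mem_sdiff.1 h).1)]
        exact hsuppxt i hiT
  have horth : (Φ *ᵥ xt) ⬝ᵥ (Φ *ᵥ w) = 0 := by
    rw [hw, mulVec_extv, ← hA, ← hres, dotProduct_mulVec, ← mulVec_transpose, hAr,
      zero_dotProduct]
  have hw_supp : ∀ i ∉ T, w i = 0 := fun i hi =>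
    extv_not_mem _ _ (fun h => hi (hST h))
  have stepB := rip_dot hδK0 hRIPK hT.le hsuppxt hw_supp
  rw [horth, zero_sub, abs_neg] at stepB
  have hl2w : l2 w ≤ l2 xt := by
    unfold l2
    apply Real.sqrt_le_sqrt
    apply Finset.sum_le_sum
    intro i _
    by_cases hiS : i ∈ S
    · rw [hw, extv_mem _ _ hiS]
      exact le_of_eq rfl
    · rw [hw, extv_not_mem _ _ hiS]
      simpa using sq_nonneg (xt i)
  have hCS : xt ⬝ᵥ g ≤ l2 xt * l2 g := by
    have h1 := Finset.sum_mul_sq_le_sq_mul_sq Finset.univ xt g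
    calc xt ⬝ᵥ g ≤ |xt ⬝ᵥ g| := le_abs_self _
      _ = Real.sqrt ((xt ⬝ᵥ g) ^ 2) := (Real.sqrt_sq_eq_abs _).symm
      _ ≤ Real.sqrt ((∑ i, xt i ^ 2) * (∑ i, g i ^ 2)) := Real.sqrt_le_sqrt h1
      _ = l2 xt * l2 g := by
          rw [Real.sqrt_mul (Finset.sum_nonneg fun i _ => sq_nonneg _)]
          rfl
  have hxx : l2 xt ^ 2 = xt ⬝ᵥ g + xt ⬝ᵥ w := by
    calc l2 xt ^ 2 = xt ⬝ᵥ xt := l2_sq_eq_dot xt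
      _ = xt ⬝ᵥ (g + w) := by rw [← hdecomp]
      _ = xt ⬝ᵥ g + xt ⬝ᵥ w := dotProduct_add _ _ _
  have hfinal : (1 - δK) * l2 xt ≤ l2 g := by
    rcases eq_or_lt_of_le (l2_nonneg xt) with h0 | h0
    · rw [← h0, mul_zero]
      exact l2_nonneg g
    · have hkey : (1 - δK) * l2 xt * l2 xt ≤ l2 g * l2 xt := by
        have hmul : δK * (l2 xt * l2 w) ≤ δK * (l2 xt * l2 xt) :=
          mul_le_mul_of_nonneg_left
            (mul_le_mul_of_nonneg_left hl2w (l2_nonneg xt)) hδK0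
        have hsq : l2 xt ^ 2 = l2 xt * l2 xt := sq (l2 xt)
        nlinarith [stepB, hxx, hCS, le_abs_self (xt ⬝ᵥ w), hmul, hsq]
      exact le_of_mul_le_mul_right hkey h0
  have hl2xt : l2 xt ≤ l2 g / (1 - δK) := by
    rw [le_div_iff₀ (by linarith : (0:ℝ) < 1 - δK)]
    linarith [hfinal]
  calc |(fun i => Φ i u) ⬝ᵥ resid Φ S y| = |Φ *ᵥ Pi.single u 1 ⬝ᵥ (Φ *ᵥ xt)| := by rw [hA1]
    _ ≤ δK1 * l2 xt := stepA
    _ ≤ δK1 * (l2 g / (1 - δK)) := mul_le_mul_of_nonneg_left hl2xt hδK10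
    _ = (δK1 / (1 - δK)) * l2 g := by ring
    _ = (δK1 / (1 - δK)) * l2 (restr x (T \ S)) := by rw [l2_restr_eq, hg]
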